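/- arXiv:2012.00327 — 5 statements merged into one kernel-verified Lean document; each statement's English description precedes it below -/
import Mathlib

section
/- Let M_R and M_I be 2×2 complex unitary matrices such that M_R*M_I = [[e, f],[f, −e]] for some real numbers e, f with e² + f² = 1. Then there exist Δ ∈ [−π, π) and complex numbers α, β with |α|² + |β|² = 1 such that M_R = e^{iΔ}·[[α, β],[−β̄, ᾱ]] and M_I = e^{iΔ}·[[eα + fβ, fα − eβ],[−eβ̄ + fᾱ, −fβ̄ − eᾱ]]. -/
open Matrix Real

/-- If `M_R`, `M_I` are 2×2 unitary matrices with `M_R*M_I = [[e,f],[f,−e]]` for real `e`, `f`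
with `e² + f² = 1`, then they admit the parametrization of equation (5) of the paper, for some
`Δ ∈ [−π, π)` and complex `α`, `β` with `|α|² + |β|² = 1`. -/
theorem dqw_coin_parametrization (MR MI : Matrix (Fin 2) (Fin 2) ℂ) (e f : ℝ)
    (hMR : MR ∈ Matrix.unitaryGroup (Fin 2) ℂ) (hMI : MI ∈ Matrix.unitaryGroup (Fin 2) ℂ)
    (hef : e ^ 2 + f ^ 2 = 1)
    (h : MRᴴ * MI = !![(e : ℂ), (f : ℂ); (f : ℂ), (-e : ℂ)]) :
    ∃ Δ ∈ Set.Ico (-π) π, ∃ α β : ℂ,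
      ‖α‖ ^ 2 + ‖β‖ ^ 2 = 1 ∧
      MR = Complex.exp (Δ * Complex.I) •
        !![α, β; -(starRingEnd ℂ) β, (starRingEnd ℂ) α] ∧
      MI = Complex.exp (Δ * Complex.I) •
        !![(e : ℂ) * α + (f : ℂ) * β, (f : ℂ) * α - (e : ℂ) * β;
           -(e : ℂ) * (starRingEnd ℂ) β + (f : ℂ) * (starRingEnd ℂ) α,
           -(f : ℂ) * (starRingEnd ℂ) β - (e : ℂ) * (starRingEnd ℂ) α] := by
  have h2 : MR * MRᴴ = 1 := by
    have := hMR.2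
    simpa [Matrix.star_eq_conjTranspose] using this
  set a := MR 0 0 with ha
  set b := MR 0 1 with hb
  set c := MR 1 0 with hc
  set d := MR 1 1 with hd
  have eab : a * (starRingEnd ℂ) a + b * (starRingEnd ℂ) b = 1 := by
    have := congrFun (congrFun h2 0) 0
    simpa [Matrix.mul_apply, Fin.sum_univ_two, Matrix.conjTranspose_apply,
      Matrix.one_apply] using this
  have ecd : c * (starRingEnd ℂ) a + d * (starRingEnd ℂ) b = 0 := by
    have := congrFun (congrFun h2 1) 0
    simpa [Matrix.mul_apply, Fin.sum_univ_two, Matrix.conjTranspose_apply,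
      Matrix.one_apply] using this
  have ecd2 : c * (starRingEnd ℂ) c + d * (starRingEnd ℂ) d = 1 := by
    have := congrFun (congrFun h2 1) 1
    simpa [Matrix.mul_apply, Fin.sum_univ_two, Matrix.conjTranspose_apply,
      Matrix.one_apply] using this
  set D := a * d - b * c with hDdef
  have hdD : d = D * (starRingEnd ℂ) a := by
    rw [hDdef]; linear_combination b * ecd - d * eab
  have hcD : c = -(D * (starRingEnd ℂ) b) := by
    rw [hDdef]; linear_combination a * ecd - c * eab
  have hdc : (starRingEnd ℂ) d = (starRingEnd ℂ) D * a := by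
    have := congrArg (starRingEnd ℂ) hdD
    simpa using this
  have hcc : (starRingEnd ℂ) c = -((starRingEnd ℂ) D * b) := by
    have := congrArg (starRingEnd ℂ) hcD
    simpa using this
  have hDD : D * (starRingEnd ℂ) D = 1 := by
    have h' := ecd2
    rw [hcc, hdc, hcD, hdD] at h'
    linear_combination h' - D * (starRingEnd ℂ) D * eab
  have hnD : Complex.normSq D = 1 := by
    have := hDD
    rw [Complex.mul_conj] at this
    exact_mod_cast this
  have habsD : ‖D‖ = 1 := by
    rw [Complex.norm_def, hnD, Real.sqrt_one]
  set Δ := D.arg / 2 with hΔ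
  set E := Complex.exp (Δ * Complex.I) with hE
  have hE2 : E * E = D := by
    rw [hE, ← Complex.exp_add]
    have : (Δ : ℂ) * Complex.I + Δ * Complex.I = (D.arg : ℂ) * Complex.I := by
      rw [hΔ]; push_cast; ring
    rw [this]
    have := Complex.norm_mul_exp_arg_mul_I D
    rwa [habsD, Complex.ofReal_one, one_mul] at this
  have hEc : (starRingEnd ℂ) E = Complex.exp (-(Δ * Complex.I)) := by
    rw [hE, ← Complex.exp_conj]
    congr 1
    simp [Complex.conj_I]
  have hEE : E * (starRingEnd ℂ) E = 1 := by
    rw [hEc, hE, ← Complex.exp_add, add_neg_cancel, Complex.exp_zero]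
  set α := (starRingEnd ℂ) E * a with hα
  set β := (starRingEnd ℂ) E * b with hβ
  have hcα : (starRingEnd ℂ) α = E * (starRingEnd ℂ) a := by
    rw [hα]; simp
  have hcβ : (starRingEnd ℂ) β = E * (starRingEnd ℂ) b := by
    rw [hβ]; simp
  have habsE : ‖E‖ = 1 := by
    rw [hE]; exact Complex.norm_exp_ofReal_mul_I Δ
  -- entry facts
  have ea : E * α = a := by rw [hα]; linear_combination a * hEE
  have eb : E * β = b := by rw [hβ]; linear_combination b * hEE
  have ec : E * (-(starRingEnd ℂ) β) = c := by
    rw [hcβ, hcD]; linear_combination -(starRingEnd ℂ) b * hE2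
  have ed : E * (starRingEnd ℂ) α = d := by
    rw [hcα, hdD]; linear_combination (starRingEnd ℂ) a * hE2
  have hMRpar : MR = E • !![α, β; -(starRingEnd ℂ) β, (starRingEnd ℂ) α] := by
    ext i j
    fin_cases i <;> fin_cases j <;>
      simp only [Matrix.smul_apply, Matrix.cons_val', Matrix.cons_val_zero,
        Matrix.cons_val_one, Matrix.head_cons, Matrix.head_fin_const,
        Matrix.empty_val', Matrix.cons_val_fin_one, smul_eq_mul]
    · exact ea.symm
    · exact eb.symm
    · exact ec.symm
    · exact ed.symm
  refine ⟨Δ, ⟨?_, ?_⟩, α, β, ?_, hMRpar, ?_⟩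
  · have h1 := Complex.neg_pi_lt_arg D
    have := Real.pi_pos
    rw [hΔ]; linarith
  · have h1 := Complex.arg_le_pi D
    have := Real.pi_pos
    rw [hΔ]; linarith
  · have eab' : (Complex.normSq a : ℂ) + (Complex.normSq b : ℂ) = 1 := by
      rw [← Complex.mul_conj, ← Complex.mul_conj]; exact eab
    have eabR : Complex.normSq a + Complex.normSq b = 1 := by exact_mod_cast eab'
    have haα : ‖α‖ = ‖a‖ := by
      rw [hα, norm_mul, Complex.norm_conj, habsE, one_mul]
    have hbβ : ‖β‖ = ‖b‖ := by
      rw [hβ, norm_mul, Complex.norm_conj, habsE, one_mul]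
    rw [haα, hbβ, Complex.sq_norm, Complex.sq_norm]
    exact eabR
  · have hMI2 : MI = MR * !![(e : ℂ), (f : ℂ); (f : ℂ), (-e : ℂ)] := by
      rw [← h, ← Matrix.mul_assoc, h2, Matrix.one_mul]
    rw [hMI2, hMRpar, Matrix.smul_mul]
    congr 1
    ext i j
    fin_cases i <;> fin_cases j <;>
      simp [Matrix.mul_apply, Fin.sum_univ_two] <;> ring
end

section
/- Let M_R and M_I be 2×2 real orthogonal matrices and let Ψ₀ ∈ ℓ²(ℤ;ℂ²). Then for every n ≥ 0 and x ∈ ℤ: ℜ(U_Dⁿ Ψ₀) = U_Rⁿ(ℜΨ₀) and ℑ(U_Dⁿ Ψ₀) = U_Iⁿ(ℑΨ₀), and hence the DQW probability measure satisfies μ_n(x) = ‖(U_Rⁿ(ℜΨ₀))(x)‖² + ‖(U_Iⁿ(ℑΨ₀))(x)‖², i.e., it is the sum of the probability measures of the two LQWs with coin matrices M_R and M_I and initial states ℜΨ₀ and ℑΨ₀ respectively. -/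
open Matrix

noncomputable section

/-- The time evolution of the 2-state LQW on `ℤ` over `ℝ` with coin matrix `M`. -/
def lqwUR (M : Matrix (Fin 2) (Fin 2) ℝ) (Φ : ℤ → Fin 2 → ℝ) : ℤ → Fin 2 → ℝ := fun x =>
  (Matrix.of ![M 0, (0 : Fin 2 → ℝ)]).mulVec (Φ (x + 1))
    + (Matrix.of ![(0 : Fin 2 → ℝ), M 1]).mulVec (Φ (x - 1))

/-- The time evolution `U_D = S∘C_D` of the 2-state DQW on `ℤ` with coin pair `(M_R, M_I)`:
`(U_DΨ)(x) = P_R(ℜΨ)(x+1) + Q_R(ℜΨ)(x−1) + i·{P_I(ℑΨ)(x+1) + Q_I(ℑΨ)(x−1)}`. -/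
def dqwU (MR MI : Matrix (Fin 2) (Fin 2) ℂ) (Ψ : ℤ → Fin 2 → ℂ) : ℤ → Fin 2 → ℂ := fun x =>
  (Matrix.of ![MR 0, (0 : Fin 2 → ℂ)]).mulVec (fun i => (((Ψ (x + 1) i).re : ℝ) : ℂ))
    + (Matrix.of ![(0 : Fin 2 → ℂ), MR 1]).mulVec (fun i => (((Ψ (x - 1) i).re : ℝ) : ℂ))
    + Complex.I •
      ((Matrix.of ![MI 0, (0 : Fin 2 → ℂ)]).mulVec (fun i => (((Ψ (x + 1) i).im : ℝ) : ℂ))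
        + (Matrix.of ![(0 : Fin 2 → ℂ), MI 1]).mulVec (fun i => (((Ψ (x - 1) i).im : ℝ) : ℂ)))

lemma dqw_step_re (MR MI : Matrix (Fin 2) (Fin 2) ℝ) (Ψ : ℤ → Fin 2 → ℂ) (x : ℤ) (i : Fin 2) :
    ((dqwU (MR.map (fun r => (r : ℂ))) (MI.map (fun r => (r : ℂ))) Ψ) x i).re
      = lqwUR MR (fun z i => (Ψ z i).re) x i := by
  fin_cases i <;>
    simp [dqwU, lqwUR, Matrix.mulVec, dotProduct, Fin.sum_univ_two,
      Complex.add_re, Complex.mul_re, Complex.mul_im]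

lemma dqw_step_im (MR MI : Matrix (Fin 2) (Fin 2) ℝ) (Ψ : ℤ → Fin 2 → ℂ) (x : ℤ) (i : Fin 2) :
    ((dqwU (MR.map (fun r => (r : ℂ))) (MI.map (fun r => (r : ℂ))) Ψ) x i).im
      = lqwUR MI (fun z i => (Ψ z i).im) x i := by
  fin_cases i <;>
    simp [dqwU, lqwUR, Matrix.mulVec, dotProduct, Fin.sum_univ_two,
      Complex.add_im, Complex.mul_re, Complex.mul_im]

/-- When `M_R` and `M_I` are real orthogonal matrices, the real and imaginary parts of the
DQW evolve independently under the LQWs with coins `M_R` and `M_I`, and the DQW probability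
measure is the sum of the probability measures of these two LQWs. -/
theorem dqw_real_coins_decouple (MR MI : Matrix (Fin 2) (Fin 2) ℝ)
    (hMR : MR ∈ Matrix.orthogonalGroup (Fin 2) ℝ)
    (hMI : MI ∈ Matrix.orthogonalGroup (Fin 2) ℝ)
    (Ψ₀ : ℤ → Fin 2 → ℂ) :
    ∀ n : ℕ, ∀ x : ℤ,
      (∀ i,
        (((dqwU (MR.map (fun r => (r : ℂ))) (MI.map (fun r => (r : ℂ))))^[n] Ψ₀) x i).re
          = ((lqwUR MR)^[n] (fun z i => (Ψ₀ z i).re)) x i) ∧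
      (∀ i,
        (((dqwU (MR.map (fun r => (r : ℂ))) (MI.map (fun r => (r : ℂ))))^[n] Ψ₀) x i).im
          = ((lqwUR MI)^[n] (fun z i => (Ψ₀ z i).im)) x i) ∧
      (∑ i, Complex.normSq
          (((dqwU (MR.map (fun r => (r : ℂ))) (MI.map (fun r => (r : ℂ))))^[n] Ψ₀) x i)
        = (∑ i, ((lqwUR MR)^[n] (fun z i => (Ψ₀ z i).re)) x i ^ 2)
          + ∑ i, ((lqwUR MI)^[n] (fun z i => (Ψ₀ z i).im)) x i ^ 2) := by
  have key : ∀ n : ℕ,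
      (∀ x i,
        (((dqwU (MR.map (fun r => (r : ℂ))) (MI.map (fun r => (r : ℂ))))^[n] Ψ₀) x i).re
          = ((lqwUR MR)^[n] (fun z i => (Ψ₀ z i).re)) x i) ∧
      (∀ x i,
        (((dqwU (MR.map (fun r => (r : ℂ))) (MI.map (fun r => (r : ℂ))))^[n] Ψ₀) x i).im
          = ((lqwUR MI)^[n] (fun z i => (Ψ₀ z i).im)) x i) := by
    intro n
    induction n with
    | zero => exact ⟨fun x i => rfl, fun x i => rfl⟩
    | succ n ih =>
      have hre : (fun z i =>
          ((((dqwU (MR.map (fun r => (r : ℂ))) (MI.map (fun r => (r : ℂ))))^[n] Ψ₀)) z i).re)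
          = (lqwUR MR)^[n] (fun z i => (Ψ₀ z i).re) := by
        funext z i; exact ih.1 z i
      have him : (fun z i =>
          ((((dqwU (MR.map (fun r => (r : ℂ))) (MI.map (fun r => (r : ℂ))))^[n] Ψ₀)) z i).im)
          = (lqwUR MI)^[n] (fun z i => (Ψ₀ z i).im) := by
        funext z i; exact ih.2 z i
      constructor
      · intro x i
        rw [Function.iterate_succ_apply', Function.iterate_succ_apply',
          dqw_step_re MR MI, hre]
      · intro x i
        rw [Function.iterate_succ_apply', Function.iterate_succ_apply',
          dqw_step_im MR MI, him]
  intro n x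
  refine ⟨(key n).1 x, (key n).2 x, ?_⟩
  rw [← Finset.sum_add_distrib]
  refine Finset.sum_congr rfl fun i _ => ?_
  rw [Complex.normSq_apply, ← (key n).1 x i, ← (key n).2 x i]
  ring

end
end

section
/- For Δ ∈ ℝ, let M̃(Δ) = (1/√2)·[[cosΔ, sinΔ, −cosΔ, sinΔ],[sinΔ, cosΔ, sinΔ, −cosΔ],[sinΔ, −cosΔ, −sinΔ, −cosΔ],[−cosΔ, sinΔ, −cosΔ, −sinΔ]] and Û(k) = diag(e^{ik}, e^{−ik}, e^{ik}, e^{−ik})·M̃(Δ), and set p = (cosΔ − sinΔ)/√2. Then for every k ∈ ℝ the characteristic polynomial of Û(k) factors as det(x·I₄ − Û(k)) = (x² − 1)(x² − 2p·cos(k)·x + 1); in particular the eigenvalues of Û(k) are λ₁ = 1, λ₂ = −1, λ₃ = p·cos(k) + i√(1 − p²cos²(k)), and λ₄ = p·cos(k) − i√(1 − p²cos²(k)). -/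
open Matrix Real

noncomputable section

/-- The coin matrix `M̃(Δ)` of the one-parameter family of 4-state Grover walks. -/
def MtildeGrover (Δ : ℝ) : Matrix (Fin 4) (Fin 4) ℝ :=
  (Real.sqrt 2)⁻¹ •
    !![Real.cos Δ, Real.sin Δ, -Real.cos Δ, Real.sin Δ;
       Real.sin Δ, Real.cos Δ, Real.sin Δ, -Real.cos Δ;
       Real.sin Δ, -Real.cos Δ, -Real.sin Δ, -Real.cos Δ;
       -Real.cos Δ, Real.sin Δ, -Real.cos Δ, -Real.sin Δ]

/-- The Fourier-space evolution matrix `Û(k) = diag(e^{ik}, e^{−ik}, e^{ik}, e^{−ik})·M̃(Δ)`. -/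
def UhatGrover (Δ : ℝ) (k : ℝ) : Matrix (Fin 4) (Fin 4) ℂ :=
  Matrix.diagonal
      ![Complex.exp ((k : ℂ) * Complex.I), Complex.exp (-(k : ℂ) * Complex.I),
        Complex.exp ((k : ℂ) * Complex.I), Complex.exp (-(k : ℂ) * Complex.I)] *
    (MtildeGrover Δ).map (fun r => (r : ℂ))

theorem myDetFour (A : Matrix (Fin 4) (Fin 4) ℂ) :
    A.det =
      A 0 0*A 1 1*A 2 2*A 3 3
      - A 0 0*A 1 1*A 2 3*A 3 2
      - A 0 0*A 1 2*A 2 1*A 3 3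
      + A 0 0*A 1 2*A 2 3*A 3 1
      + A 0 0*A 1 3*A 2 1*A 3 2
      - A 0 0*A 1 3*A 2 2*A 3 1
      - A 0 1*A 1 0*A 2 2*A 3 3
      + A 0 1*A 1 0*A 2 3*A 3 2
      + A 0 1*A 1 2*A 2 0*A 3 3
      - A 0 1*A 1 2*A 2 3*A 3 0
      - A 0 1*A 1 3*A 2 0*A 3 2
      + A 0 1*A 1 3*A 2 2*A 3 0
      + A 0 2*A 1 0*A 2 1*A 3 3
      - A 0 2*A 1 0*A 2 3*A 3 1
      - A 0 2*A 1 1*A 2 0*A 3 3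
      + A 0 2*A 1 1*A 2 3*A 3 0
      + A 0 2*A 1 3*A 2 0*A 3 1
      - A 0 2*A 1 3*A 2 1*A 3 0
      - A 0 3*A 1 0*A 2 1*A 3 2
      + A 0 3*A 1 0*A 2 2*A 3 1
      + A 0 3*A 1 1*A 2 0*A 3 2
      - A 0 3*A 1 1*A 2 2*A 3 0
      - A 0 3*A 1 2*A 2 0*A 3 1
      + A 0 3*A 1 2*A 2 1*A 3 0 := by
  rw [Matrix.det_succ_row_zero, Fin.sum_univ_four]
  have h3 : (Fin.succ 2 : Fin 4) = 3 := rfl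
  have hc : (Fin.castSucc 2 : Fin 4) = 2 := rfl
  have hv : ((3 : Fin 4) : ℕ) = 3 := rfl
  simp [Matrix.det_fin_three, Matrix.submatrix_apply, Fin.succAbove, Fin.lt_def, h3, hc, hv]
  ring

theorem uhat_det (Δ k : ℝ) (x : ℂ) :
    Matrix.det (x • (1 : Matrix (Fin 4) (Fin 4) ℂ) - UhatGrover Δ k)
      = (x ^ 2 - 1) *
        (x ^ 2
          - 2 * (((Real.cos Δ - Real.sin Δ) / Real.sqrt 2 : ℝ) : ℂ) * (Real.cos k : ℂ) * x
          + 1) := by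
  set c : ℂ := (Real.cos Δ : ℂ) with hcdef
  set s : ℂ := (Real.sin Δ : ℂ) with hsdef
  set E : ℂ := Complex.exp ((k : ℂ) * Complex.I) with hEdef
  set F : ℂ := Complex.exp (-(k : ℂ) * Complex.I) with hFdef
  set q : ℂ := ((Real.sqrt 2 : ℝ) : ℂ)⁻¹ with hqdef
  have h1 : c ^ 2 + s ^ 2 = 1 := by
    rw [hcdef, hsdef]
    push_cast
    exact_mod_cast congrArg (fun r : ℝ => (r : ℂ)) (Real.cos_sq_add_sin_sq Δ)
  have hEF : E * F = 1 := by
    rw [hEdef, hFdef, ← Complex.exp_add]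
    ring_nf
    exact Complex.exp_zero
  have hq : q ^ 2 = 2⁻¹ := by
    have h2 : ((Real.sqrt 2 : ℝ) : ℂ) ^ 2 = 2 := by
      rw [← Complex.ofReal_pow, Real.sq_sqrt (by norm_num : (0:ℝ) ≤ 2)]
      norm_num
    rw [hqdef, inv_pow, h2]
  have hcos : (Real.cos k : ℂ) = (E + F) / 2 := by
    rw [Complex.ofReal_cos, Complex.cos, hEdef, hFdef]
  have hp : (((Real.cos Δ - Real.sin Δ) / Real.sqrt 2 : ℝ) : ℂ) = (c - s) * q := by
    rw [hcdef, hsdef, hqdef]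
    push_cast
    ring
  rw [hp, hcos, myDetFour]
  have entry : ∀ i j, (x • (1 : Matrix (Fin 4) (Fin 4) ℂ) - UhatGrover Δ k) i j
      = (if i = j then x else 0)
        - (![E, F, E, F] i) * q *
          (!![c, s, -c, s; s, c, s, -c; s, -c, -s, -c; -c, s, -c, -s] i j) := by
    intro i j
    simp only [Matrix.sub_apply, Matrix.smul_apply, Matrix.one_apply, UhatGrover,
      Matrix.diagonal_mul, Matrix.map_apply, MtildeGrover, Matrix.smul_apply,
      smul_eq_mul, Complex.ofReal_mul, Complex.ofReal_inv, hcdef, hsdef, hqdef, hEdef, hFdef]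
    fin_cases i <;> fin_cases j <;>
      simp [Matrix.cons_val_zero, Matrix.cons_val_one, Matrix.head_cons] <;> ring
  simp only [entry]
  simp only [Matrix.of_apply, Matrix.cons_val', Matrix.cons_val_zero, Matrix.cons_val_one,
    Matrix.head_cons, Matrix.empty_val', Matrix.cons_val_fin_one, Matrix.head_fin_const,
    Fin.reduceEq, reduceIte, Matrix.cons_val_two, Matrix.cons_val_three, Matrix.tail_cons]
  linear_combination
      (-4*E^2*F^2*q^4 - 4*s^2*E^2*F^2*q^4 - 4*c^2*E^2*F^2*q^4 - 2*x*s*E*F^2*q^3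
        - 2*x*s*E^2*F*q^3 + 2*x*c*E*F^2*q^3 + 2*x*c*E^2*F*q^3) * h1
    + (-4*q^4 - 4*E*F*q^4 - 2*x*s*F*q^3 - 2*x*s*E*q^3 + 2*x*c*F*q^3 + 2*x*c*E*q^3) * hEF
    + (-2 - 4*q^2 - 2*x*s*F*q - 2*x*s*E*q + 2*x*c*F*q + 2*x*c*E*q) * hq

/-- With `p = (cosΔ − sinΔ)/√2`, the characteristic polynomial of `Û(k)` factors as
`(x² − 1)(x² − 2p·cos(k)·x + 1)`; in particular the eigenvalues of `Û(k)` are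
`1`, `−1`, and `p·cos(k) ± i√(1 − p²cos²(k))`. -/
theorem uhat_grover_charpoly (Δ : ℝ) :
    ∀ k : ℝ,
      (∀ x : ℂ,
        Matrix.det (x • (1 : Matrix (Fin 4) (Fin 4) ℂ) - UhatGrover Δ k)
          = (x ^ 2 - 1) *
            (x ^ 2
              - 2 * (((Real.cos Δ - Real.sin Δ) / Real.sqrt 2 : ℝ) : ℂ) * (Real.cos k : ℂ) * x
              + 1)) ∧
      spectrum ℂ (UhatGrover Δ k) =
        {(1 : ℂ), (-1 : ℂ),
          ((((Real.cos Δ - Real.sin Δ) / Real.sqrt 2) * Real.cos k : ℝ) : ℂ)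
            + (Real.sqrt (1 - ((Real.cos Δ - Real.sin Δ) / Real.sqrt 2) ^ 2 * Real.cos k ^ 2) : ℂ)
              * Complex.I,
          ((((Real.cos Δ - Real.sin Δ) / Real.sqrt 2) * Real.cos k : ℝ) : ℂ)
            - (Real.sqrt (1 - ((Real.cos Δ - Real.sin Δ) / Real.sqrt 2) ^ 2 * Real.cos k ^ 2) : ℂ)
              * Complex.I} := by
  intro k
  refine ⟨fun x => uhat_det Δ k x, ?_⟩
  set p : ℝ := (Real.cos Δ - Real.sin Δ) / Real.sqrt 2 with hpdef
  set b : ℝ := Real.sqrt (1 - p ^ 2 * Real.cos k ^ 2) with hbdef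
  set aC : ℂ := ((p * Real.cos k : ℝ) : ℂ) with haCdef
  have hple : p ^ 2 * Real.cos k ^ 2 ≤ 1 := by
    have h1 : Real.cos Δ ^ 2 + Real.sin Δ ^ 2 = 1 := Real.cos_sq_add_sin_sq Δ
    have h2 : Real.cos k ^ 2 ≤ 1 := Real.cos_sq_le_one k
    have hp2 : p ^ 2 ≤ 1 := by
      rw [hpdef, div_pow, Real.sq_sqrt (by norm_num : (0:ℝ) ≤ 2)]
      nlinarith [sq_nonneg (Real.cos Δ + Real.sin Δ)]
    nlinarith [sq_nonneg p, sq_nonneg (Real.cos k), sq_nonneg (p * Real.cos k)]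
  have hb2 : b ^ 2 = 1 - p ^ 2 * Real.cos k ^ 2 :=
    Real.sq_sqrt (by linarith)
  have hbC : ((b : ℝ) : ℂ) ^ 2 = 1 - aC ^ 2 := by
    rw [haCdef]
    push_cast
    exact_mod_cast congrArg (fun r : ℝ => (r : ℂ)) (by rw [hb2]; ring)
  have haC : aC = ((p : ℝ) : ℂ) * ((Real.cos k : ℝ) : ℂ) := by
    rw [haCdef]; push_cast; ring
  have key : ∀ z : ℂ,
      Matrix.det (z • (1 : Matrix (Fin 4) (Fin 4) ℂ) - UhatGrover Δ k)
        = (z - 1) * (z + 1) * (z - (aC + (b : ℂ) * Complex.I))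
            * (z - (aC - (b : ℂ) * Complex.I)) := by
    intro z
    rw [uhat_det]
    linear_combination (z^2 - 1) * (2*z) * haC + (-(z^2 - 1)) * hbC
      + ((z^2 - 1) * ((b:ℂ))^2) * Complex.I_sq
  ext z
  simp only [Set.mem_insert_iff, Set.mem_singleton_iff, spectrum.mem_iff,
    Algebra.algebraMap_eq_smul_one, Matrix.isUnit_iff_isUnit_det, isUnit_iff_ne_zero,
    not_not, key z, mul_eq_zero, sub_eq_zero, add_eq_zero_iff_eq_neg, or_assoc]

end
end

section
/- For Δ ∈ ℝ with Δ ≢ 3π/4 and Δ ≢ −π/4 (mod 2π), let Û(k) = diag(e^{ik}, e^{−ik}, e^{ik}, e^{−ik})·M̃(Δ), p = (cosΔ − sinΔ)/√2, and let λ be either of p·cos(k) ± i√(1 − p²cos²(k)). Define x₁ = λe^{ik} + √2·sinΔ, x₂ = λ⁻¹e^{−ik} − √2·cosΔ, x₃ = λ⁻¹e^{ik} + √2·sinΔ, x₄ = λe^{−ik} − √2·cosΔ, and v = (x₁x₂x₃, x̄₁x₃x₄, x₁x₂x̄₄, x₂x₃x₄)ᵀ ∈ ℂ⁴, where x̄ denotes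 complex conjugation. Then Û(k)·v = λ·v, i.e., v is an eigenvector of Û(k) associated with the eigenvalue λ. -/
open Matrix Real

noncomputable section

/-- `x₁ = λe^{ik} + √2·sinΔ`. -/
def ev1 (Δ k : ℝ) (lam : ℂ) : ℂ :=
  lam * Complex.exp ((k : ℂ) * Complex.I) + (Real.sqrt 2 : ℂ) * (Real.sin Δ : ℂ)

/-- `x₂ = λ⁻¹e^{−ik} − √2·cosΔ`. -/
def ev2 (Δ k : ℝ) (lam : ℂ) : ℂ :=
  lam⁻¹ * Complex.exp (-(k : ℂ) * Complex.I) - (Real.sqrt 2 : ℂ) * (Real.cos Δ : ℂ)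

/-- `x₃ = λ⁻¹e^{ik} + √2·sinΔ`. -/
def ev3 (Δ k : ℝ) (lam : ℂ) : ℂ :=
  lam⁻¹ * Complex.exp ((k : ℂ) * Complex.I) + (Real.sqrt 2 : ℂ) * (Real.sin Δ : ℂ)

/-- `x₄ = λe^{−ik} − √2·cosΔ`. -/
def ev4 (Δ k : ℝ) (lam : ℂ) : ℂ :=
  lam * Complex.exp (-(k : ℂ) * Complex.I) - (Real.sqrt 2 : ℂ) * (Real.cos Δ : ℂ)

lemma row0 (L M a b c s q : ℂ) (h1 : a*b = 1) (h2 : L*M = 1)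
    (h3 : c^2 + s^2 = 1) (h4 : q^2 = 2) (h5 : q*L + q*M = (c - s)*(a + b)) :
    a*((c)*((L*a+q*s)*(M*b-q*c)*(M*a+q*s)) + (s)*((M*b+q*s)*(M*a+q*s)*(L*b-q*c)) + (-c)*((L*a+q*s)*(M*b-q*c)*(M*a-q*c)) + (s)*((M*b-q*c)*(M*a+q*s)*(L*b-q*c))) = q*L*((L*a+q*s)*(M*b-q*c)*(M*a+q*s)) := by
  linear_combination ((-1)*L^2*M^2*a*q + (-1)*L^2*M*s*q^2 + (2)*L*M^2*a*b*s + (-1)*L*M^2*s*q^2 + (1)*L*M*a*c^2*q + (1)*L*M*a*s^2*q + (2)*L*M*b*s^2*q + (-1)*L*c*s^2*q^2 + (1)*L*s^3*q^2 + (-2)*M^2*a*c*s*q + (1)*M*c^2*s*q^2 + (-1)*M*c*s^2*q^2 + (2)*L*M^2*s + (2)*L*c^2*s + (-2)*L*c*s^2 + (-2)*M*c^2*s + (2)*M*c*s^2)*h1 + ((1)*L*a^2*c*q^2 + (1)*a*c*s*q^3 + (-1)*b*s^2*q^3 + (-1)*L*M*a*q + (-1)*L*s*q^2 + (-1)*M*s*q^2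 + (1)*a*c^2*q + (1)*a*s^2*q + (2)*b*s^2*q + (2)*M*s + (-1)*a*q)*h2 + ((-1)*L*a^2*c*q^2 + (-1)*L*a^2*s*q^2 + (1)*M*a^2*s*q^2 + (-1)*a*c*s*q^3 + (2)*L*a^2*s + (-2)*M*a^2*s + (1)*M*s*q^2 + (2)*L*s + (-2)*M*s + (1)*a*q)*h3 + ((1)*L^2*a*c*s*q + (1)*L*a^2*c*s^2 + (1)*L*a^2*s^3 + (1)*L*c*s^2*q^2 + (-1)*M*a^2*c*s^2 + (-1)*M*a^2*s^3 + (-1)*L*a^2*s + (1)*L*c*s^2 + (1)*L*s^3 + (1)*M*a^2*s + (-1)*M*c*s^2 + (-1)*M*s^3 + (-1)*b*s^2*q + (-1)*L*s)*h4 + ((2)*L*a*c*s + (-2)*M*a*c*s)*h5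

lemma row1 (L M a b c s q : ℂ) (h1 : a*b = 1) (h2 : L*M = 1)
    (h3 : c^2 + s^2 = 1) (h4 : q^2 = 2) (h5 : q*L + q*M = (c - s)*(a + b)) :
    b*((s)*((L*a+q*s)*(M*b-q*c)*(M*a+q*s)) + (c)*((M*b+q*s)*(M*a+q*s)*(L*b-q*c)) + (s)*((L*a+q*s)*(M*b-q*c)*(M*a-q*c)) + (-c)*((M*b-q*c)*(M*a+q*s)*(L*b-q*c))) = q*L*((M*b+q*s)*(M*a+q*s)*(L*b-q*c)) := by
  linear_combination ((-1)*L^2*M^2*b*q + (-1)*L^2*M*s*q^2 + (2)*L*M^2*a*b*s + (1)*L*M^2*c*q^2 + (-2)*L*M*a*c*s*q + (1)*L*M*b*c^2*q + (1)*L*M*b*s^2*q + (1)*L*c^2*s*q^2 + (-1)*L*c*s^2*q^2 + (2)*M^2*b*s^2*q + (-1)*M*c^3*q^2 + (-1)*M*c^2*s*q^2 + (-2)*M*c*s^2*q^2 + (2)*L*M^2*s + (-2)*L*c*s^2 + (2)*L*s^3 + (2)*M*c*s^2 + (-2)*M*s^3)*h1 + ((-1)*L*b^2*s*q^2 + (1)*a*c*s*q^3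 + (1)*b*c*s*q^3 + (-1)*L*M*b*q + (-1)*L*s*q^2 + (1)*M*c*q^2 + (-2)*a*c*s*q + (1)*b*c^2*q + (1)*b*s^2*q + (2)*M*s + (-1)*b*q)*h2 + ((1)*L*b^2*s*q^2 + (-1)*b*c*s*q^3 + (1)*L*s*q^2 + (-1)*M*c*q^2 + (-1)*M*s*q^2 + (1)*b*q)*h3 + ((-1)*L^2*b*s^2*q + (1)*L*b^2*c*s^2 + (-1)*L*b^2*s^3 + (1)*L*c*s^2*q^2 + (-1)*M*b^2*c*s^2 + (1)*M*b^2*s^3 + (1)*L*c*s^2 + (-1)*L*s^3 + (-1)*M*c*s^2 + (1)*M*s^3 + (1)*a*c*s*q + (-1)*M*s)*h4 + ((-2)*L*b*s^2 + (2)*M*b*s^2)*h5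

lemma row2 (L M a b c s q : ℂ) (h1 : a*b = 1) (h2 : L*M = 1)
    (h3 : c^2 + s^2 = 1) (h4 : q^2 = 2) (h5 : q*L + q*M = (c - s)*(a + b)) :
    a*((s)*((L*a+q*s)*(M*b-q*c)*(M*a+q*s)) + (-c)*((M*b+q*s)*(M*a+q*s)*(L*b-q*c)) + (-s)*((L*a+q*s)*(M*b-q*c)*(M*a-q*c)) + (-c)*((M*b-q*c)*(M*a+q*s)*(L*b-q*c))) = q*L*((L*a+q*s)*(M*b-q*c)*(M*a-q*c)) := by
  linear_combination ((-1)*L^2*M^2*a*q + (1)*L^2*M*c*q^2 + (-2)*L*M^2*a*b*c + (-1)*L*M^2*s*q^2 + (1)*L*M*a*c^2*q + (1)*L*M*a*s^2*q + (-2)*L*M*b*c*s*q + (1)*L*c^2*s*q^2 + (-1)*L*c*s^2*q^2 + (2)*M^2*a*c^2*q + (2)*M*c^2*s*q^2 + (1)*M*c*s^2*q^2 + (1)*M*s^3*q^2 + (-2)*L*M^2*c + (2)*L*c*s^2 + (-2)*L*s^3 + (-2)*M*c*s^2 + (2)*M*s^3 + (-2)*L*c + (2)*L*s + (2)*M*c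 + (-2)*M*s)*h1 + ((1)*L*a^2*c*q^2 + (1)*a*c*s*q^3 + (1)*b*c*s*q^3 + (-1)*L*M*a*q + (1)*L*c*q^2 + (-1)*M*s*q^2 + (1)*a*c^2*q + (1)*a*s^2*q + (-2)*b*c*s*q + (-2)*M*c + (-1)*a*q)*h2 + ((-1)*L^2*a*q^3 + (-1)*L*a^2*s*q^2 + (-1)*L*s*q^4 + (-1)*M*a^2*c*q^2 + (1)*M*a^2*s*q^2 + (-1)*a*c*s*q^3 + (1)*L*s*q^2 + (2)*M^2*a*q + (2)*M*s*q^2 + (1)*a*q)*h3 + ((1)*L^2*a*s^2*q + (-1)*L*a^2*c*s^2 + (1)*L*a^2*s^3 + (1)*L*s^3*q^2 + (1)*M*a^2*c*s^2 + (-1)*M*a^2*s^3 + (-1)*L^2*a*q + (1)*L*a^2*c + (-1)*L*a^2*s + (-1)*L*c*s^2 + (1)*L*s^3 + (-1)*L*s*q^2 + (-1)*M*a^2*c + (1)*M*a^2*s + (1)*M*c*s^2 + (-1)*M*s^3 + (1)*b*c*s*q + (1)*L*c + (-1)*L*s + (1)*M*s)*h4 + ((2)*L*a*s^2 + (-2)*M*a*s^2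 + (-2)*L*a + (2)*M*a)*h5

lemma row3 (L M a b c s q : ℂ) (h1 : a*b = 1) (h2 : L*M = 1)
    (h3 : c^2 + s^2 = 1) (h4 : q^2 = 2) (h5 : q*L + q*M = (c - s)*(a + b)) :
    b*((-c)*((L*a+q*s)*(M*b-q*c)*(M*a+q*s)) + (s)*((M*b+q*s)*(M*a+q*s)*(L*b-q*c)) + (-c)*((L*a+q*s)*(M*b-q*c)*(M*a-q*c)) + (-s)*((M*b-q*c)*(M*a+q*s)*(L*b-q*c))) = q*L*((M*b-q*c)*(M*a+q*s)*(L*b-q*c)) := by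
  linear_combination ((-1)*L^2*M^2*b*q + (1)*L^2*M*c*q^2 + (-2)*L*M^2*a*b*c + (1)*L*M^2*c*q^2 + (2)*L*M*a*c^2*q + (1)*L*M*b*c^2*q + (1)*L*M*b*s^2*q + (-1)*L*c^3*q^2 + (1)*L*c^2*s*q^2 + (-2)*M^2*b*c*s*q + (1)*M*c^2*s*q^2 + (-1)*M*c*s^2*q^2 + (-2)*L*M^2*c + (2)*L*c^2*s + (-2)*L*c*s^2 + (-2)*M*c^2*s + (2)*M*c*s^2)*h1 + ((-1)*L*b^2*s*q^2 + (-1)*a*c^2*q^3 + (1)*b*c*s*q^3 + (-1)*L*M*b*q + (1)*L*c*q^2 + (1)*M*c*q^2 + (2)*a*c^2*q + (1)*b*c^2*q + (1)*b*s^2*q + (-2)*M*c + (-1)*b*q)*h2 + ((-1)*L*s*q^4 + (1)*M*b^2*s*q^2 + (-1)*b*c*s*q^3 + (2)*L*b^2*s + (-1)*L*c*q^2 + (1)*L*s*q^2 + (-2)*M*b^2*s + (1)*M*s*q^2 + (-1)*a*q^3 + (2)*L*s + (-2)*M*s + (2)*a*q + (1)*b*q)*h3 + ((1)*L^2*b*c*s*q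 + (1)*L*b^2*c*s^2 + (1)*L*b^2*s^3 + (1)*L*s^3*q^2 + (-1)*M*b^2*c*s^2 + (-1)*M*b^2*s^3 + (-1)*L*b^2*s + (1)*L*c*s^2 + (1)*L*s^3 + (-1)*L*s*q^2 + (1)*M*b^2*s + (-1)*M*c*s^2 + (-1)*M*s^3 + (1)*a*s^2*q + (-1)*L*s + (1)*M*c + (1)*M*s + (-1)*a*q)*h4 + ((2)*L*b*c*s + (-2)*M*b*c*s)*h5

/-- `v = (x₁x₂x₃, x̄₁x₃x₄, x₁x₂x̄₄, x₂x₃x₄)ᵀ` is an eigenvector of `Û(k)` associated with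
either nontrivial eigenvalue `λ = p·cos(k) ± i√(1 − p²cos²(k))`, provided
`Δ ≢ 3π/4` and `Δ ≢ −π/4 (mod 2π)`. -/
theorem uhat_grover_eigenvector (Δ k : ℝ)
    (hΔ : ∀ m : ℤ, Δ ≠ 3 * π / 4 + 2 * π * m ∧ Δ ≠ -π / 4 + 2 * π * m)
    (lam : ℂ)
    (hlam :
      lam = ((((Real.cos Δ - Real.sin Δ) / Real.sqrt 2) * Real.cos k : ℝ) : ℂ)
              + (Real.sqrt (1 - ((Real.cos Δ - Real.sin Δ) / Real.sqrt 2) ^ 2 * Real.cos k ^ 2) : ℂ)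
                * Complex.I ∨
      lam = ((((Real.cos Δ - Real.sin Δ) / Real.sqrt 2) * Real.cos k : ℝ) : ℂ)
              - (Real.sqrt (1 - ((Real.cos Δ - Real.sin Δ) / Real.sqrt 2) ^ 2 * Real.cos k ^ 2) : ℂ)
                * Complex.I) :
    (UhatGrover Δ k).mulVec
        ![ev1 Δ k lam * ev2 Δ k lam * ev3 Δ k lam,
          (starRingEnd ℂ) (ev1 Δ k lam) * ev3 Δ k lam * ev4 Δ k lam,
          ev1 Δ k lam * ev2 Δ k lam * (starRingEnd ℂ) (ev4 Δ k lam),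
          ev2 Δ k lam * ev3 Δ k lam * ev4 Δ k lam]
      = lam • ![ev1 Δ k lam * ev2 Δ k lam * ev3 Δ k lam,
          (starRingEnd ℂ) (ev1 Δ k lam) * ev3 Δ k lam * ev4 Δ k lam,
          ev1 Δ k lam * ev2 Δ k lam * (starRingEnd ℂ) (ev4 Δ k lam),
          ev2 Δ k lam * ev3 Δ k lam * ev4 Δ k lam] := by
  have hq0 : Real.sqrt 2 ≠ 0 := by positivity
  set p : ℝ := (Real.cos Δ - Real.sin Δ) / Real.sqrt 2 with hp
  have hp1 : p ^ 2 ≤ 1 := by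
    rw [hp, div_pow, Real.sq_sqrt (by norm_num : (2:ℝ) ≥ 0)]
    nlinarith [Real.sin_sq_add_cos_sq Δ, sq_nonneg (Real.cos Δ + Real.sin Δ)]
  have hynn : 0 ≤ 1 - p ^ 2 * Real.cos k ^ 2 := by
    nlinarith [Real.cos_sq_le_one k, sq_nonneg p, sq_nonneg (Real.cos k)]
  set y : ℝ := Real.sqrt (1 - p ^ 2 * Real.cos k ^ 2) with hy
  have hy2 : y ^ 2 = 1 - p ^ 2 * Real.cos k ^ 2 := Real.sq_sqrt hynn
  have hy2c : (y : ℂ) ^ 2 = 1 - (p : ℂ) ^ 2 * (Real.cos k : ℂ) ^ 2 := by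
    exact_mod_cast congrArg (fun t : ℝ => (t : ℂ)) hy2
  have hnorm : lam * (starRingEnd ℂ) lam = 1 := by
    rcases hlam with h | h <;> rw [h] <;>
      simp only [map_add, map_sub, _root_.map_mul, Complex.conj_ofReal, Complex.conj_I,
        Complex.ofReal_mul] <;>
      linear_combination hy2c + (-(y : ℂ) ^ 2) * Complex.I_sq
  have hL0 : lam ≠ 0 := left_ne_zero_of_mul_eq_one hnorm
  have hconj : (starRingEnd ℂ) lam = lam⁻¹ :=
    eq_inv_of_mul_eq_one_right (by linear_combination hnorm)
  have h2 : lam * lam⁻¹ = 1 := mul_inv_cancel₀ hL0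
  have hsum : lam + lam⁻¹ = 2 * (p : ℂ) * (Real.cos k : ℂ) := by
    rw [← hconj]
    rcases hlam with h | h <;> rw [h] <;>
      simp only [map_add, map_sub, _root_.map_mul, Complex.conj_ofReal, Complex.conj_I,
        Complex.ofReal_mul] <;> ring
  have hab : Complex.exp ((k : ℂ) * Complex.I) + Complex.exp (-((k : ℂ) * Complex.I))
      = 2 * (Real.cos k : ℂ) := by
    rw [Complex.exp_mul_I, show (-((k : ℂ) * Complex.I)) = (-(k:ℂ)) * Complex.I by ring,
      Complex.exp_mul_I, Complex.cos_neg, Complex.sin_neg, Complex.ofReal_cos]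
    ring
  have hqp : (Real.sqrt 2 : ℂ) * (p : ℂ) = (Real.cos Δ : ℂ) - (Real.sin Δ : ℂ) := by
    have : Real.sqrt 2 * p = Real.cos Δ - Real.sin Δ := by
      rw [hp]; field_simp
    exact_mod_cast congrArg (fun t : ℝ => (t : ℂ)) this
  have h5 : (Real.sqrt 2 : ℂ) * lam + (Real.sqrt 2 : ℂ) * lam⁻¹
      = ((Real.cos Δ : ℂ) - (Real.sin Δ : ℂ))
        * (Complex.exp ((k : ℂ) * Complex.I) + Complex.exp (-((k : ℂ) * Complex.I))) := by
    linear_combination (Real.sqrt 2 : ℂ) * hsum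
      + (-((Real.cos Δ : ℂ) - (Real.sin Δ : ℂ))) * hab + 2 * (Real.cos k : ℂ) * hqp
  have h1 : Complex.exp ((k : ℂ) * Complex.I) * Complex.exp (-((k : ℂ) * Complex.I)) = 1 := by
    rw [← Complex.exp_add]; simp
  have h3 : (Real.cos Δ : ℂ) ^ 2 + (Real.sin Δ : ℂ) ^ 2 = 1 := by
    exact_mod_cast congrArg (fun t : ℝ => (t : ℂ)) (Real.cos_sq_add_sin_sq Δ)
  have h4 : (Real.sqrt 2 : ℂ) ^ 2 = 2 := by
    have : Real.sqrt 2 ^ 2 = 2 := Real.sq_sqrt (by norm_num)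
    exact_mod_cast congrArg (fun t : ℝ => (t : ℂ)) this
  have hqi : (Real.sqrt 2 : ℂ) * ((Real.sqrt 2 : ℝ) : ℂ)⁻¹ = 1 :=
    mul_inv_cancel₀ (by exact_mod_cast hq0)
  have hce : (starRingEnd ℂ) (Complex.exp ((k : ℂ) * Complex.I))
      = Complex.exp (-((k : ℂ) * Complex.I)) := by
    rw [← Complex.exp_conj]; congr 1
    simp [Complex.conj_ofReal]
  have hce' : (starRingEnd ℂ) (Complex.exp (-(k : ℂ) * Complex.I))
      = Complex.exp ((k : ℂ) * Complex.I) := by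
    rw [← Complex.exp_conj]; congr 1
    simp [Complex.conj_ofReal]
  have hce1 : (starRingEnd ℂ) (ev1 Δ k lam)
      = lam⁻¹ * Complex.exp (-((k : ℂ) * Complex.I)) + (Real.sqrt 2 : ℂ) * (Real.sin Δ : ℂ) := by
    simp only [ev1, map_add, _root_.map_mul, hce, hconj, Complex.conj_ofReal]
  have hce4 : (starRingEnd ℂ) (ev4 Δ k lam)
      = lam⁻¹ * Complex.exp ((k : ℂ) * Complex.I) - (Real.sqrt 2 : ℂ) * (Real.cos Δ : ℂ) := by
    simp only [ev4, map_sub, _root_.map_mul, hce', hconj, Complex.conj_ofReal]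
  have r0 := row0 lam lam⁻¹ (Complex.exp ((k : ℂ) * Complex.I))
      (Complex.exp (-((k : ℂ) * Complex.I))) (Real.cos Δ : ℂ) (Real.sin Δ : ℂ)
      (Real.sqrt 2 : ℂ) h1 h2 h3 h4 h5
  have r1 := row1 lam lam⁻¹ (Complex.exp ((k : ℂ) * Complex.I))
      (Complex.exp (-((k : ℂ) * Complex.I))) (Real.cos Δ : ℂ) (Real.sin Δ : ℂ)
      (Real.sqrt 2 : ℂ) h1 h2 h3 h4 h5
  have r2 := row2 lam lam⁻¹ (Complex.exp ((k : ℂ) * Complex.I))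
      (Complex.exp (-((k : ℂ) * Complex.I))) (Real.cos Δ : ℂ) (Real.sin Δ : ℂ)
      (Real.sqrt 2 : ℂ) h1 h2 h3 h4 h5
  have r3 := row3 lam lam⁻¹ (Complex.exp ((k : ℂ) * Complex.I))
      (Complex.exp (-((k : ℂ) * Complex.I))) (Real.cos Δ : ℂ) (Real.sin Δ : ℂ)
      (Real.sqrt 2 : ℂ) h1 h2 h3 h4 h5
  simp only [hce1, hce4]
  funext i
  fin_cases i <;>
    simp only [UhatGrover, MtildeGrover, Matrix.mulVec, dotProduct,
      Fin.sum_univ_four, Matrix.diagonal_mul, Matrix.map_apply,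
      Matrix.smul_apply, smul_eq_mul, Fin.zero_eta, Fin.mk_one, Fin.reduceFinMk,
      Matrix.cons_val', Matrix.cons_val_zero, Matrix.cons_val_one, Matrix.head_cons,
      Matrix.empty_val', Matrix.cons_val_fin_one, Matrix.head_fin_const, Pi.smul_apply,
      Matrix.of_apply, Matrix.cons_val_two, Matrix.cons_val_three, Matrix.tail_cons,
      Fin.isValue, Complex.ofReal_mul, Complex.ofReal_inv, Complex.ofReal_neg,
      mul_neg, neg_mul, ev1, ev2, ev3, ev4]
  · linear_combination (((Real.sqrt 2 : ℝ) : ℂ))⁻¹ * r0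
      + (lam * ((lam * Complex.exp ((k : ℂ) * Complex.I) + (Real.sqrt 2 : ℂ) * (Real.sin Δ : ℂ))
          * (lam⁻¹ * Complex.exp (-((k : ℂ) * Complex.I)) - (Real.sqrt 2 : ℂ) * (Real.cos Δ : ℂ))
          * (lam⁻¹ * Complex.exp ((k : ℂ) * Complex.I) + (Real.sqrt 2 : ℂ) * (Real.sin Δ : ℂ)))) * hqi
  · linear_combination (((Real.sqrt 2 : ℝ) : ℂ))⁻¹ * r1
      + (lam * ((lam⁻¹ * Complex.exp (-((k : ℂ) * Complex.I)) + (Real.sqrt 2 : ℂ) * (Real.sin Δ : ℂ))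
          * (lam⁻¹ * Complex.exp ((k : ℂ) * Complex.I) + (Real.sqrt 2 : ℂ) * (Real.sin Δ : ℂ))
          * (lam * Complex.exp (-((k : ℂ) * Complex.I)) - (Real.sqrt 2 : ℂ) * (Real.cos Δ : ℂ)))) * hqi
  · linear_combination (((Real.sqrt 2 : ℝ) : ℂ))⁻¹ * r2
      + (lam * ((lam * Complex.exp ((k : ℂ) * Complex.I) + (Real.sqrt 2 : ℂ) * (Real.sin Δ : ℂ))
          * (lam⁻¹ * Complex.exp (-((k : ℂ) * Complex.I)) - (Real.sqrt 2 : ℂ) * (Real.cos Δ : ℂ))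
          * (lam⁻¹ * Complex.exp ((k : ℂ) * Complex.I) - (Real.sqrt 2 : ℂ) * (Real.cos Δ : ℂ)))) * hqi
  · linear_combination (((Real.sqrt 2 : ℝ) : ℂ))⁻¹ * r3
      + (lam * ((lam⁻¹ * Complex.exp (-((k : ℂ) * Complex.I)) - (Real.sqrt 2 : ℂ) * (Real.cos Δ : ℂ))
          * (lam⁻¹ * Complex.exp ((k : ℂ) * Complex.I) + (Real.sqrt 2 : ℂ) * (Real.sin Δ : ℂ))
          * (lam * Complex.exp (-((k : ℂ) * Complex.I)) - (Real.sqrt 2 : ℂ) * (Real.cos Δ : ℂ)))) * hqi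
end
end

section
/- Let Δ = π/4 or Δ = −3π/4, and let Û(k) = diag(e^{ik}, e^{−ik}, e^{ik}, e^{−ik})·M̃(Δ). Then Û(k)⁴ = I₄ for every k ∈ ℝ. Moreover, setting j = 0 if Δ = π/4 and j = 1 if Δ = −3π/4: Û(k)¹ = ((−1)^j/2)·[[e^{ik}, e^{ik}, −e^{ik}, e^{ik}],[e^{−ik}, e^{−ik}, e^{−ik}, −e^{−ik}],[e^{ik}, −e^{ik}, −e^{ik}, −e^{ik}],[−e^{−ik}, e^{−ik}, −e^{−ik}, −e^{−ik}]], Û(k)² = (1/2)·[[0, 1+e^{2ik}, 0, −1+e^{2ik}],[1+e^{−2ik}, 0, −1+e^{−2ik}, 0],[0, −1+e^{2ik}, 0, 1+e^{2ik}],[−1+e^{−2ik}, 0, 1+e^{−2ik}, 0]], and Û(k)³ = ((−1)^j/2)·[[e^{−ik}, e^{ik}, e^{−ik}, −e^{ik}],[e^{−ik}, e^{ik}, −e^{−ik}, e^{ik}],[−e^{−ik}, e^{ik}, −e^{−ik}, −e^{ik}],[e^{−ik}, −e^{ik}, −e^{−ik}, −e^{ik}]]. -/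
open Matrix Real

noncomputable section

lemma M_eq (Δ : ℝ) (j : ℕ)
    (hΔ : (Δ = π / 4 ∧ j = 0) ∨ (Δ = -3 * π / 4 ∧ j = 1)) :
    MtildeGrover Δ = ((-1) ^ j / 2 : ℝ) •
      !![1, 1, -1, 1; 1, 1, 1, -1; 1, -1, -1, -1; -1, 1, -1, -1] := by
  have hne : Real.sqrt 2 ≠ 0 := by positivity
  rcases hΔ with ⟨h, hj⟩ | ⟨h, hj⟩ <;> subst h <;> subst hj
  · unfold MtildeGrover
    rw [Real.cos_pi_div_four, Real.sin_pi_div_four]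
    ext i jj
    fin_cases i <;> fin_cases jj <;>
      simp [Matrix.smul_apply, Matrix.vecHead, Matrix.vecTail] <;> field_simp
  · have h34 : (-3 * π / 4 : ℝ) = -(π - π / 4) := by ring
    unfold MtildeGrover
    rw [h34, Real.cos_neg, Real.sin_neg, Real.cos_pi_sub, Real.sin_pi_sub,
      Real.cos_pi_div_four, Real.sin_pi_div_four]
    ext i jj
    fin_cases i <;> fin_cases jj <;>
      simp [Matrix.smul_apply, Matrix.vecHead, Matrix.vecTail] <;> field_simp

set_option maxHeartbeats 6000000 in
/-- For `Δ = π/4` (`j = 0`) or `Δ = −3π/4` (`j = 1`), `Û(k)⁴ = I₄` and the powers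
`Û(k)`, `Û(k)²`, `Û(k)³` are given explicitly. -/
theorem uhat_grover_period_four (Δ : ℝ) (j : ℕ)
    (hΔ : (Δ = π / 4 ∧ j = 0) ∨ (Δ = -3 * π / 4 ∧ j = 1)) :
    ∀ k : ℝ,
      UhatGrover Δ k ^ 4 = 1 ∧
      UhatGrover Δ k
        = ((-1) ^ j / 2 : ℂ) •
          !![Complex.exp ((k : ℂ) * Complex.I), Complex.exp ((k : ℂ) * Complex.I),
               -Complex.exp ((k : ℂ) * Complex.I), Complex.exp ((k : ℂ) * Complex.I);
             Complex.exp (-(k : ℂ) * Complex.I), Complex.exp (-(k : ℂ) * Complex.I),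
               Complex.exp (-(k : ℂ) * Complex.I), -Complex.exp (-(k : ℂ) * Complex.I);
             Complex.exp ((k : ℂ) * Complex.I), -Complex.exp ((k : ℂ) * Complex.I),
               -Complex.exp ((k : ℂ) * Complex.I), -Complex.exp ((k : ℂ) * Complex.I);
             -Complex.exp (-(k : ℂ) * Complex.I), Complex.exp (-(k : ℂ) * Complex.I),
               -Complex.exp (-(k : ℂ) * Complex.I), -Complex.exp (-(k : ℂ) * Complex.I)] ∧
      UhatGrover Δ k ^ 2
        = (1 / 2 : ℂ) •
          !![0, 1 + Complex.exp (2 * (k : ℂ) * Complex.I), 0,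
               -1 + Complex.exp (2 * (k : ℂ) * Complex.I);
             1 + Complex.exp (-(2 * (k : ℂ)) * Complex.I), 0,
               -1 + Complex.exp (-(2 * (k : ℂ)) * Complex.I), 0;
             0, -1 + Complex.exp (2 * (k : ℂ) * Complex.I), 0,
               1 + Complex.exp (2 * (k : ℂ) * Complex.I);
             -1 + Complex.exp (-(2 * (k : ℂ)) * Complex.I), 0,
               1 + Complex.exp (-(2 * (k : ℂ)) * Complex.I), 0] ∧
      UhatGrover Δ k ^ 3
        = ((-1) ^ j / 2 : ℂ) •
          !![Complex.exp (-(k : ℂ) * Complex.I), Complex.exp ((k : ℂ) * Complex.I),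
               Complex.exp (-(k : ℂ) * Complex.I), -Complex.exp ((k : ℂ) * Complex.I);
             Complex.exp (-(k : ℂ) * Complex.I), Complex.exp ((k : ℂ) * Complex.I),
               -Complex.exp (-(k : ℂ) * Complex.I), Complex.exp ((k : ℂ) * Complex.I);
             -Complex.exp (-(k : ℂ) * Complex.I), Complex.exp ((k : ℂ) * Complex.I),
               -Complex.exp (-(k : ℂ) * Complex.I), -Complex.exp ((k : ℂ) * Complex.I);
             Complex.exp (-(k : ℂ) * Complex.I), -Complex.exp ((k : ℂ) * Complex.I),
               -Complex.exp (-(k : ℂ) * Complex.I), -Complex.exp ((k : ℂ) * Complex.I)] := by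
  intro k
  set z := Complex.exp ((k : ℂ) * Complex.I) with hzdef
  set w := Complex.exp (-(k : ℂ) * Complex.I) with hwdef
  have hzw : z * w = 1 := by
    rw [hzdef, hwdef, ← Complex.exp_add]
    have h : (k : ℂ) * Complex.I + -(k : ℂ) * Complex.I = 0 := by ring
    rw [h, Complex.exp_zero]
  have hz2 : Complex.exp (2 * (k : ℂ) * Complex.I) = z * z := by
    rw [hzdef, ← Complex.exp_add]; ring_nf
  have hw2 : Complex.exp (-(2 * (k : ℂ)) * Complex.I) = w * w := by
    rw [hwdef, ← Complex.exp_add]; ring_nf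
  have hsq : ((-1 : ℂ) ^ j) * ((-1 : ℂ) ^ j) = 1 := by
    rw [← pow_add, ← two_mul, pow_mul]; norm_num
  have hq : ((-1 : ℂ) ^ j / 2) * ((-1 : ℂ) ^ j / 2) = 1 / 4 := by
    rw [div_mul_div_comm, hsq]; norm_num
  have hU : UhatGrover Δ k = ((-1) ^ j / 2 : ℂ) •
      !![z, z, -z, z; w, w, w, -w; z, -z, -z, -z; -w, w, -w, -w] := by
    rw [UhatGrover, M_eq Δ j hΔ]
    ext i jj
    fin_cases i <;> fin_cases jj <;>
      simp [Matrix.mul_apply, Fin.sum_univ_four, Matrix.diagonal, Matrix.vecHead,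
        Matrix.vecTail, hzdef, hwdef] <;> push_cast <;> ring
  clear_value z w
  have hU2 : UhatGrover Δ k ^ 2 = (1 / 2 : ℂ) •
      !![0, 1 + z * z, 0, -1 + z * z;
         1 + w * w, 0, -1 + w * w, 0;
         0, -1 + z * z, 0, 1 + z * z;
         -1 + w * w, 0, 1 + w * w, 0] := by
    rw [pow_two, hU, Matrix.smul_mul, Matrix.mul_smul, smul_smul, hq]
    ext i jj
    fin_cases i <;> fin_cases jj <;>
      simp [Matrix.mul_apply, Fin.sum_univ_four, Matrix.vecHead, Matrix.vecTail] <;>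
      first
        | ring1
        | linear_combination (1 / 2 : ℂ) * hzw
        | linear_combination (-1 / 2 : ℂ) * hzw
  refine ⟨?_, ?_, ?_, ?_⟩
  · have h4 : UhatGrover Δ k ^ 4 = UhatGrover Δ k ^ 2 * UhatGrover Δ k ^ 2 := by
      rw [← pow_add]
    rw [h4, hU2, Matrix.smul_mul, Matrix.mul_smul, smul_smul]
    ext i jj
    fin_cases i <;> fin_cases jj <;>
      simp [Matrix.mul_apply, Fin.sum_univ_four, Matrix.vecHead, Matrix.vecTail,
        Matrix.one_apply] <;>
      first
        | ring1
        | linear_combination ((1 : ℂ) / 2 + z * w / 2) * hzw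
        | linear_combination ((1 : ℂ) + z * w) * hzw
        | linear_combination ((3 : ℂ) / 2 + 3 * z * w / 2) * hzw
        | linear_combination ((2 : ℂ) + 2 * z * w) * hzw
  · rw [hU]
  · rw [hU2, hz2, hw2]
  · have h3 : UhatGrover Δ k ^ 3 = UhatGrover Δ k ^ 2 * UhatGrover Δ k := by
      rw [← pow_succ]
    rw [h3, hU2, hU, Matrix.smul_mul, Matrix.mul_smul, smul_smul]
    ext i jj
    fin_cases i <;> fin_cases jj <;>
      simp [Matrix.mul_apply, Fin.sum_univ_four, Matrix.vecHead, Matrix.vecTail] <;>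
      first
        | ring1
        | linear_combination ((-1 : ℂ) ^ j / 2) * z * hzw
        | linear_combination (-((-1 : ℂ) ^ j / 2)) * z * hzw
        | linear_combination ((-1 : ℂ) ^ j / 2) * w * hzw
        | linear_combination (-((-1 : ℂ) ^ j / 2)) * w * hzw


end
end
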